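/- Let φ : X → Z be a continuous surjection of compact Hausdorff spaces, and let λφ : λX → λZ be the induced map defined by λφ(ξ) = {A ⊆ Z closed : φ(F) ⊆ A for some F ∈ ξ}. If λφ is skeletal, then φ is skeletal. -/

import Mathlib

universe u

/-- A maximal linked system on `X`: a family of nonempty closed subsets of `X`, any two
members of which intersect, which is maximal among such families (any nonempty closed set
meeting every member already belongs to the family). -/
structure MaxLinked (X : Type u) [TopologicalSpace X] where
  sets : Set (Set X)
  isClosed' : ∀ F ∈ sets, IsClosed F
  nonempty' : ∀ F ∈ sets, F.Nonempty
  linked' : ∀ F ∈ sets, ∀ G ∈ sets, (F ∩ G).Nonempty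
  maximal' : ∀ F : Set X, IsClosed F → F.Nonempty →
    (∀ G ∈ sets, (F ∩ G).Nonempty) → F ∈ sets

/-- For `H ⊆ X`, the set `H⁺ = {ξ ∈ λX : F ⊆ H for some F ∈ ξ}`. -/
def MaxLinked.plus {X : Type u} [TopologicalSpace X] (H : Set X) : Set (MaxLinked X) :=
  {ξ | ∃ F ∈ ξ.sets, F ⊆ H}

/-- The superextension topology on `λX`: generated by the sets `U⁺` with `U` open in `X`
(finite intersections `[U₁⁺, …, U_k⁺]` of such sets form a base). -/
instance MaxLinked.instTopologicalSpace (X : Type u) [TopologicalSpace X] :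
    TopologicalSpace (MaxLinked X) :=
  TopologicalSpace.generateFrom {S | ∃ U : Set X, IsOpen U ∧ S = MaxLinked.plus U}

/-- A continuous map `f : X → Y` is skeletal if for every nonempty open `U ⊆ X`,
the interior in `Y` of the closure in `Y` of `f '' U` is nonempty. -/
def Skeletal {X Y : Type*} [TopologicalSpace X] [TopologicalSpace Y] (f : X → Y) : Prop :=
  ∀ U : Set X, IsOpen U → U.Nonempty → (interior (closure (f '' U))).Nonempty

section Aux

variable {Y : Type u} [TopologicalSpace Y]

/-- Any linked family of nonempty closed sets extends to a maximal linked system. -/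
lemma exists_maxLinked_ext (L : Set (Set Y)) (hcl : ∀ F ∈ L, IsClosed F)
    (hne : ∀ F ∈ L, F.Nonempty) (hlink : ∀ F ∈ L, ∀ G ∈ L, (F ∩ G).Nonempty) :
    ∃ ξ : MaxLinked Y, L ⊆ ξ.sets := by
  set S : Set (Set (Set Y)) :=
    {M | (∀ F ∈ M, IsClosed F ∧ F.Nonempty) ∧ ∀ F ∈ M, ∀ G ∈ M, (F ∩ G).Nonempty} with hS
  have hLS : L ∈ S := ⟨fun F hF => ⟨hcl F hF, hne F hF⟩, hlink⟩
  obtain ⟨M, hLM, hMmax⟩ := zorn_subset_nonempty S (fun c hcS hchain _ => by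
    refine ⟨⋃₀ c, ⟨?_, ?_⟩, fun s hs => Set.subset_sUnion_of_mem hs⟩
    · rintro F ⟨m, hm, hFm⟩
      exact (hcS hm).1 F hFm
    · rintro F ⟨m, hm, hFm⟩ G ⟨m', hm', hGm'⟩
      rcases hchain.total hm hm' with h | h
      · exact (hcS hm').2 F (h hFm) G hGm'
      · exact (hcS hm).2 F hFm G (h hGm')) L hLS
  refine ⟨⟨M, fun F hF => (hMmax.1.1 F hF).1, fun F hF => (hMmax.1.1 F hF).2,
    hMmax.1.2, ?_⟩, hLM⟩
  intro F hFcl hFne hmeets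
  have hins : insert F M ∈ S := by
    constructor
    · rintro G (rfl | hG)
      · exact ⟨hFcl, hFne⟩
      · exact hMmax.1.1 G hG
    · rintro G (rfl | hG) G' (rfl | hG')
      · simpa using hFne
      · exact hmeets G' hG'
      · rw [Set.inter_comm]; exact hmeets G hG
      · exact hMmax.1.2 G hG G' hG'
  exact hMmax.2 hins (Set.subset_insert F M) (Set.mem_insert F M)

lemma isOpen_plus {U : Set Y} (hU : IsOpen U) : IsOpen (MaxLinked.plus U) :=
  TopologicalSpace.GenerateOpen.basic _ ⟨U, hU, rfl⟩

/-- The principal maximal linked system at a point. -/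
def MaxLinked.principal [T1Space Y] (y : Y) : MaxLinked Y where
  sets := {F | IsClosed F ∧ y ∈ F}
  isClosed' := fun _ hF => hF.1
  nonempty' := fun _ hF => ⟨y, hF.2⟩
  linked' := fun _ hF _ hG => ⟨y, hF.2, hG.2⟩
  maximal' := by
    intro F hFcl _ hmeets
    have := hmeets {y} ⟨isClosed_singleton, rfl⟩
    obtain ⟨p, hp1, hp2⟩ := this
    rcases hp2 with rfl
    exact ⟨hFcl, hp1⟩

lemma compl_plus_closed [Nonempty Y] {C : Set Y} (hC : IsClosed C) :
    IsClosed (MaxLinked.plus C) := by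
  have : (MaxLinked.plus C)ᶜ = MaxLinked.plus Cᶜ := by
    ext ξ
    constructor
    · intro hξ
      by_contra hne
      apply hξ
      have huniv : (Set.univ : Set Y) ∈ ξ.sets :=
        ξ.maximal' _ isClosed_univ Set.univ_nonempty
          (fun G hG => by simpa using ξ.nonempty' G hG)
      have hmeet : ∀ G ∈ ξ.sets, (C ∩ G).Nonempty := by
        intro G hG
        by_contra hGC
        refine hne ⟨G, hG, fun p hp => ?_⟩
        intro hpC
        exact hGC ⟨p, hpC, hp⟩
      have hCne : C.Nonempty := by
        obtain ⟨p, hp, -⟩ := hmeet Set.univ huniv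
        exact ⟨p, hp⟩
      exact ⟨C, ξ.maximal' C hC hCne hmeet, le_refl C⟩
    · rintro ⟨G, hG, hGC⟩ ⟨F, hF, hFC⟩
      obtain ⟨p, hpF, hpG⟩ := ξ.linked' F hF G hG
      exact hGC hpG (hFC hpF)
  rw [← isOpen_compl_iff, this]
  exact isOpen_plus hC.isOpen_compl

end Aux


/-- The induced map `λφ : λX → λZ` of a continuous surjection `φ : X → Z` of compact
Hausdorff spaces, defined by `λφ ξ = {A ⊆ Z closed : φ(F) ⊆ A for some F ∈ ξ}`. -/
def lambdaMap {X Z : Type u} [TopologicalSpace X] [TopologicalSpace Z]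
    [CompactSpace X] [T2Space Z] (φ : X → Z) (hc : Continuous φ)
    (hs : Function.Surjective φ) (ξ : MaxLinked X) : MaxLinked Z where
  sets := {A : Set Z | IsClosed A ∧ ∃ F ∈ ξ.sets, φ '' F ⊆ A}
  isClosed' := fun _ hA => hA.1
  nonempty' := by
    rintro A ⟨-, F, hF, hFA⟩
    obtain ⟨x, hx⟩ := ξ.nonempty' F hF
    exact ⟨φ x, hFA ⟨x, hx, rfl⟩⟩
  linked' := by
    rintro A ⟨-, F, hF, hFA⟩ A' ⟨-, F', hF', hFA'⟩
    obtain ⟨x, hxF, hxF'⟩ := ξ.linked' F hF F' hF'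
    exact ⟨φ x, hFA ⟨x, hxF, rfl⟩, hFA' ⟨x, hxF', rfl⟩⟩
  maximal' := by
    intro A hAcl hAne hmeets
    have hpre : φ ⁻¹' A ∈ ξ.sets := by
      apply ξ.maximal' _ (hAcl.preimage hc)
      · obtain ⟨z, hz⟩ := hAne
        obtain ⟨x, rfl⟩ := hs z
        exact ⟨x, hz⟩
      · intro G hG
        have himg : (φ '' G) ∈ {A : Set Z | IsClosed A ∧ ∃ F ∈ ξ.sets, φ '' F ⊆ A} :=
          ⟨((ξ.isClosed' G hG).isCompact.image hc).isClosed, G, hG, subset_rfl⟩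
        obtain ⟨z, hzA, x, hxG, rfl⟩ := hmeets _ himg
        exact ⟨x, hzA, hxG⟩
    exact ⟨hAcl, φ ⁻¹' A, hpre, Set.image_preimage_subset φ A⟩

/-- For a continuous surjection `φ : X → Z` of compact Hausdorff spaces,
if the induced map `λφ : λX → λZ` is skeletal, then `φ` is skeletal. -/
theorem skeletal_of_lambdaMap_skeletal {X Z : Type u}
    [TopologicalSpace X] [CompactSpace X] [T2Space X]
    [TopologicalSpace Z] [CompactSpace Z] [T2Space Z]
    (φ : X → Z) (hc : Continuous φ) (hs : Function.Surjective φ)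
    (h : Skeletal (lambdaMap φ hc hs)) : Skeletal φ := by
  intro U hU hUne
  obtain ⟨x, hx⟩ := hUne
  haveI : Nonempty X := ⟨x⟩
  haveI : Nonempty Z := ⟨φ x⟩
  set C := closure (φ '' U) with hCdef
  have hplusUne : (MaxLinked.plus U).Nonempty :=
    ⟨MaxLinked.principal x, {x}, ⟨isClosed_singleton, rfl⟩, by simpa using hx⟩
  obtain ⟨ξW, hξW⟩ := h (MaxLinked.plus U) (isOpen_plus hU) hplusUne
  set W := interior (closure (lambdaMap φ hc hs '' MaxLinked.plus U)) with hW
  have himg : lambdaMap φ hc hs '' MaxLinked.plus U ⊆ MaxLinked.plus C := by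
    rintro _ ⟨ξ, ⟨F, hF, hFU⟩, rfl⟩
    exact ⟨C, ⟨isClosed_closure, F, hF, (Set.image_mono (f := φ) hFU).trans subset_closure⟩,
      le_refl C⟩
  have hWC : W ⊆ MaxLinked.plus C :=
    interior_subset.trans (closure_minimal himg (compl_plus_closed isClosed_closure))
  have hbasis := TopologicalSpace.isTopologicalBasis_of_subbasis
    (s := {S | ∃ V : Set Z, IsOpen V ∧ S = MaxLinked.plus V}) rfl
  obtain ⟨t, ⟨f, ⟨hffin, hfsub⟩, rfl⟩, hξt, htW⟩ :=
    hbasis.exists_subset_of_mem_open hξW isOpen_interior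
  by_contra hint
  rw [Set.not_nonempty_iff_eq_empty] at hint
  have hdense : Dense Cᶜ := interior_eq_empty_iff_dense_compl.mp hint
  rcases Set.eq_empty_or_nonempty f with rfl | ⟨S₀, hS₀⟩
  · obtain ⟨z₁, hz₁⟩ := hdense.nonempty
    have hmem : MaxLinked.principal z₁ ∈ MaxLinked.plus C :=
      hWC (htW (by simp))
    obtain ⟨F, ⟨-, hz₁F⟩, hFC⟩ := hmem
    exact hz₁ (hFC hz₁F)
  · have hV : ∀ S : Set (MaxLinked Z), ∃ V : Set Z,
        S ∈ f → IsOpen V ∧ S = MaxLinked.plus V := by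
      intro S
      by_cases hS : S ∈ f
      · obtain ⟨V, hVo, hVe⟩ := hfsub hS
        exact ⟨V, fun _ => ⟨hVo, hVe⟩⟩
      · exact ⟨∅, fun h' => absurd h' hS⟩
    choose V hVspec using hV
    have hξf : ∀ S, S ∈ f → ∃ F ∈ ξW.sets, F ⊆ V S := by
      intro S hS
      have hmem : ξW ∈ S := hξt S hS
      rwa [(hVspec S hS).2] at hmem
    choose F hFmem hFsub using hξf
    have hz : ∀ S T : Set (MaxLinked Z), ∃ p : Z,
        S ∈ f → T ∈ f → p ∈ V S ∧ p ∈ V T ∧ p ∈ Cᶜ := by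
      intro S T
      by_cases hS : S ∈ f
      · by_cases hT : T ∈ f
        · obtain ⟨q, hq1, hq2⟩ := ξW.linked' _ (hFmem S hS) _ (hFmem T hT)
          obtain ⟨p, hp⟩ := hdense.inter_open_nonempty (V S ∩ V T)
            ((hVspec S hS).1.inter (hVspec T hT).1)
            ⟨q, hFsub S hS hq1, hFsub T hT hq2⟩
          exact ⟨p, fun _ _ => ⟨hp.1.1, hp.1.2, hp.2⟩⟩
        · exact ⟨Classical.arbitrary Z, fun _ hT' => absurd hT' hT⟩
      · exact ⟨Classical.arbitrary Z, fun hS' => absurd hS' hS⟩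
    choose z hzspec using hz
    set G : Set (MaxLinked Z) → Set Z :=
      fun S => (fun T => z S T) '' f ∪ (fun T => z T S) '' f with hG
    have hGfin : ∀ S, (G S).Finite := fun S => (hffin.image _).union (hffin.image _)
    have hGsubV : ∀ S ∈ f, G S ⊆ V S := by
      rintro S hS p (⟨T, hT, rfl⟩ | ⟨T, hT, rfl⟩)
      · exact (hzspec S T hS hT).1
      · exact (hzspec T S hT hS).2.1
    have hGsubCc : ∀ S ∈ f, G S ⊆ Cᶜ := by
      rintro S hS p (⟨T, hT, rfl⟩ | ⟨T, hT, rfl⟩)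
      · exact (hzspec S T hS hT).2.2
      · exact (hzspec T S hT hS).2.2
    obtain ⟨ξ', hξ'⟩ := exists_maxLinked_ext (G '' f)
      (by rintro _ ⟨S, hS, rfl⟩; exact (hGfin S).isClosed)
      (by rintro _ ⟨S, hS, rfl⟩; exact ⟨z S S, Or.inl ⟨S, hS, rfl⟩⟩)
      (by
        rintro _ ⟨S, hS, rfl⟩ _ ⟨T, hT, rfl⟩
        exact ⟨z S T, Or.inl ⟨T, hT, rfl⟩, Or.inr ⟨S, hS, rfl⟩⟩)
    have hξ'mem : ξ' ∈ ⋂₀ f := by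
      intro S hS
      rw [(hVspec S hS).2]
      exact ⟨G S, hξ' ⟨S, hS, rfl⟩, hGsubV S hS⟩
    obtain ⟨F', hF', hF'C⟩ := hWC (htW hξ'mem)
    obtain ⟨p, hpF', hpG⟩ := ξ'.linked' F' hF' (G S₀) (hξ' ⟨S₀, hS₀, rfl⟩)
    exact hGsubCc S₀ hS₀ hpG (hF'C hpF')
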